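/- arXiv:2502.12564 — 2 statements merged into one kernel-verified Lean document; each statement's English description precedes it below -/
import Mathlib

section
/- For d ≥ 2, integers z_1,...,z_d ∈ {1,...,m} and thresholds i_1,...,i_d ∈ {0,...,m}: MReLU_{i_1,i_2,...,i_d}(z) − MReLU_{i_1+1,i_2,...,i_d}(z) = 𝟙[z_1 ≥ i_1+1] · ∏_{j=2}^d 𝟙[z_1 − z_j ≥ i_1 − i_j + 1], where MReLU_{i_1,...,i_d}(z_1,...,z_d) = max{z_1−i_1, ..., z_d−i_d, 0}. -/
/-- `MReLU` with integer thresholds `i : Fin n → ℤ` evaluated at `z : Fin n → ℤ`: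
`max {z_1 - i_1, ..., z_n - i_n, 0}`. -/
def MReLU {n : ℕ} (i z : Fin n → ℤ) : ℤ :=
  ((Finset.univ.sup fun j => (z j - i j).toNat : ℕ) : ℤ)

/-- For `d ≥ 2` (here `d = d' + 2`), the discrete difference of `MReLU` in the first
threshold coordinate is a hyperrectangle indicator:
`MReLU_{i_1,...,i_d}(z) − MReLU_{i_1+1,i_2,...,i_d}(z)
  = 𝟙[z_1 ≥ i_1+1] · ∏_{j=2}^d 𝟙[z_1 − z_j ≥ i_1 − i_j + 1]`. -/
theorem mrelu_difference_eq_hyperrectangle_indicator (d' m : ℕ)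
    (z i : Fin (d' + 2) → ℤ)
    (hz : ∀ j, 1 ≤ z j ∧ z j ≤ (m : ℤ)) (hi : ∀ j, 0 ≤ i j ∧ i j ≤ (m : ℤ)) :
    MReLU i z - MReLU (Function.update i 0 (i 0 + 1)) z =
      (if i 0 + 1 ≤ z 0 then (1 : ℤ) else 0) *
        ∏ j ∈ Finset.univ.filter (fun j => j ≠ (0 : Fin (d' + 2))),
          (if i 0 - i j + 1 ≤ z 0 - z j then (1 : ℤ) else 0) := by
  classical
  rw [Finset.prod_boole]
  simp only [Finset.mem_filter, Finset.mem_univ, true_and]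
  set i' := Function.update i 0 (i 0 + 1) with hi'def
  have hi'0 : i' 0 = i 0 + 1 := Function.update_self _ _ _
  have hi'j : ∀ j : Fin (d' + 2), j ≠ 0 → i' j = i j :=
    fun j hj => Function.update_of_ne hj _ _
  by_cases h1 : i 0 + 1 ≤ z 0
  · by_cases h2 : ∀ j : Fin (d' + 2), j ≠ 0 → i 0 - i j + 1 ≤ z 0 - z j
    · rw [if_pos h1, if_pos h2]
      have hN : (Finset.univ.sup fun j => (z j - i j).toNat) = (z 0 - i 0).toNat := by
        apply le_antisymm
        · apply Finset.sup_le
          intro j _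
          by_cases hj : j = 0
          · subst hj; exact le_refl _
          · have := h2 j hj; omega
        · exact Finset.le_sup (f := fun j => (z j - i j).toNat) (Finset.mem_univ 0)
      have hN' : (Finset.univ.sup fun j => (z j - i' j).toNat) = (z 0 - i 0 - 1).toNat := by
        apply le_antisymm
        · apply Finset.sup_le
          intro j _
          by_cases hj : j = 0
          · subst hj; rw [hi'0]; omega
          · rw [hi'j j hj]; have := h2 j hj; omega
        · have h := Finset.le_sup (f := fun j => (z j - i' j).toNat) (Finset.mem_univ 0)
          beta_reduce at h
          rw [hi'0] at h; omega
      unfold MReLU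
      rw [hN, hN']
      omega
    · rw [if_neg h2, mul_zero]
      have hEq : (Finset.univ.sup fun j => (z j - i' j).toNat)
          = (Finset.univ.sup fun j => (z j - i j).toNat) := by
        apply le_antisymm
        · apply Finset.sup_le
          intro j _
          have h := Finset.le_sup (f := fun j => (z j - i j).toNat) (Finset.mem_univ j)
          beta_reduce at h
          by_cases hj : j = 0
          · subst hj; rw [hi'0]; omega
          · rw [hi'j j hj]; exact h
        · apply Finset.sup_le
          intro j _
          by_cases hj : j = 0
          · subst hj
            push_neg at h2
            obtain ⟨k, hk, hlt⟩ := h2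
            have h := Finset.le_sup (f := fun j => (z j - i' j).toNat) (Finset.mem_univ k)
            beta_reduce at h
            rw [hi'j k hk] at h
            omega
          · have h := Finset.le_sup (f := fun j => (z j - i' j).toNat) (Finset.mem_univ j)
            beta_reduce at h
            rw [hi'j j hj] at h
            exact h
      unfold MReLU
      rw [hEq]; ring
  · rw [if_neg h1, zero_mul]
    have hEq : (Finset.univ.sup fun j => (z j - i' j).toNat)
        = (Finset.univ.sup fun j => (z j - i j).toNat) := by
      apply le_antisymm
      · apply Finset.sup_le
        intro j _
        have h := Finset.le_sup (f := fun j => (z j - i j).toNat) (Finset.mem_univ j)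
        by_cases hj : j = 0
        · subst hj; rw [hi'0]; omega
        · rw [hi'j j hj]; exact h
      · apply Finset.sup_le
        intro j _
        by_cases hj : j = 0
        · subst hj
          have h := Finset.le_sup (f := fun j => (z j - i' j).toNat) (Finset.mem_univ 0)
          beta_reduce at h
          rw [hi'0] at h
          omega
        · have h := Finset.le_sup (f := fun j => (z j - i' j).toNat) (Finset.mem_univ j)
          beta_reduce at h
          rw [hi'j j hj] at h
          exact h
    unfold MReLU
    rw [hEq]; ring
end

section
/- Fix a finite action set A, a loss ℓ : A × Y → [0,1] linear and L-Lipschitz (ℓ∞) in its second argument with Y ⊆ [0,1]^d, predictions p_1,...,p_T ∈ Y, outcomes y_1,...,y_T ∈ Y, and actions a_t ∈ A. Suppose that for every a ∈ A, ‖∑_{t : a_t = a} (p_t − y_t)‖_∞ ≤ β(T(a)) where T(a) = #{t : a_t = a} and β is concave and nondecreasing with β(0) ≥ 0. Then |∑_{t=1}^T (ℓ(a_t, p_t) − ℓ(a_t, y_t))| ≤ L·|A|·β(T/|A|). -/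
/-- Decision calibration implies accurate loss estimates for linear losses:
if the predictions are conditionally unbiased on each chosen action (with concave,
nondecreasing error bound `β`), then the total gap between predicted and realized linear
`L`-Lipschitz losses is at most `L·|A|·β(T/|A|)`. -/
theorem decision_calibration_linear_loss_bound (d T : ℕ) (A : Type) [Fintype A] [DecidableEq A]
    [Nonempty A] (L : ℝ) (hL : 0 ≤ L)
    (r : A → Fin d → ℝ)
    (hlip : ∀ (a : A) (y y' : Fin d → ℝ),
      |∑ i, r a i * y i - ∑ i, r a i * y' i| ≤ L * ⨆ i, |y i - y' i|)
    (hrange : ∀ (a : A) (y : Fin d → ℝ), (∀ i, y i ∈ Set.Icc (0 : ℝ) 1) →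
      (∑ i, r a i * y i) ∈ Set.Icc (0 : ℝ) 1)
    (p yv : Fin T → Fin d → ℝ)
    (hp : ∀ t i, p t i ∈ Set.Icc (0 : ℝ) 1)
    (hy : ∀ t i, yv t i ∈ Set.Icc (0 : ℝ) 1)
    (act : Fin T → A)
    (β : ℝ → ℝ) (hconc : ConcaveOn ℝ Set.univ β) (hmono : Monotone β)
    (hβ0 : 0 ≤ β 0)
    (hcal : ∀ a : A,
      (⨆ i, |∑ t ∈ Finset.univ.filter (fun t => act t = a), (p t i - yv t i)|) ≤
        β ((Finset.univ.filter (fun t => act t = a)).card)) :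
    |∑ t, ((∑ i, r (act t) i * p t i) - ∑ i, r (act t) i * yv t i)| ≤
      L * Fintype.card A * β ((T : ℝ) / Fintype.card A) := by
  classical
  set n := Fintype.card A with hn
  have hnpos : 0 < n := Fintype.card_pos
  have hnR : (0 : ℝ) < n := by exact_mod_cast hnpos
  -- regroup the sum by action
  have hregroup : ∑ t, ((∑ i, r (act t) i * p t i) - ∑ i, r (act t) i * yv t i)
      = ∑ a : A, ∑ t ∈ Finset.univ.filter (fun t => act t = a),
          ((∑ i, r (act t) i * p t i) - ∑ i, r (act t) i * yv t i) :=
    (Finset.sum_fiberwise_of_maps_to (fun t _ => Finset.mem_univ (act t)) _).symm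
  -- per-action bound
  have hper : ∀ a : A,
      |∑ t ∈ Finset.univ.filter (fun t => act t = a),
        ((∑ i, r (act t) i * p t i) - ∑ i, r (act t) i * yv t i)|
      ≤ L * β ((Finset.univ.filter (fun t => act t = a)).card) := by
    intro a
    set s := Finset.univ.filter (fun t : Fin T => act t = a) with hs
    have hact : ∀ t ∈ s, act t = a := fun t ht => (Finset.mem_filter.mp ht).2
    have hrw : ∑ t ∈ s, ((∑ i, r (act t) i * p t i) - ∑ i, r (act t) i * yv t i)
        = (∑ i, r a i * (∑ t ∈ s, p t i)) - ∑ i, r a i * (∑ t ∈ s, yv t i) := by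
      rw [Finset.sum_congr rfl (fun t ht => by rw [hact t ht])]
      rw [Finset.sum_sub_distrib]
      congr 1 <;> · simp_rw [Finset.mul_sum]; exact Finset.sum_comm
    rw [hrw]
    calc |(∑ i, r a i * (∑ t ∈ s, p t i)) - ∑ i, r a i * (∑ t ∈ s, yv t i)|
        ≤ L * ⨆ i, |(∑ t ∈ s, p t i) - ∑ t ∈ s, yv t i| := hlip a _ _
      _ ≤ L * β (s.card) := by
          refine mul_le_mul_of_nonneg_left ?_ hL
          have : (⨆ i, |(∑ t ∈ s, p t i) - ∑ t ∈ s, yv t i|)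
              = ⨆ i, |∑ t ∈ s, (p t i - yv t i)| := by
            simp_rw [Finset.sum_sub_distrib]
          rw [this]
          exact hcal a
  -- Jensen step
  have hsumcard : ∑ a : A, ((Finset.univ.filter (fun t => act t = a)).card : ℝ) = (T : ℝ) := by
    have := Finset.card_eq_sum_card_fiberwise (f := act)
      (s := (Finset.univ : Finset (Fin T))) (t := Finset.univ)
      (fun t _ => Finset.mem_univ _)
    simp only [Finset.card_univ, Fintype.card_fin] at this
    exact_mod_cast this.symm
  have hjensen : ∑ a : A, β ((Finset.univ.filter (fun t => act t = a)).card)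
      ≤ (n : ℝ) * β ((T : ℝ) / n) := by
    have hw : ∀ a ∈ (Finset.univ : Finset A), (0:ℝ) ≤ (n : ℝ)⁻¹ :=
      fun _ _ => inv_nonneg.mpr hnR.le
    have hw1 : ∑ a : A, ((n : ℝ)⁻¹) = 1 := by
      rw [Finset.sum_const, Finset.card_univ, nsmul_eq_mul, ← hn]
      field_simp
    have hmem : ∀ a ∈ (Finset.univ : Finset A),
        (((Finset.univ.filter (fun t => act t = a)).card : ℝ)) ∈ (Set.univ : Set ℝ) :=
      fun _ _ => trivial
    have := hconc.le_map_sum hw hw1 hmem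
    simp only [smul_eq_mul] at this
    have heq : ∑ a : A, (n : ℝ)⁻¹ * ((Finset.univ.filter (fun t => act t = a)).card : ℝ)
        = (T : ℝ) / n := by
      rw [← Finset.mul_sum, hsumcard]; ring
    rw [heq] at this
    have h2 : ∑ a : A, (n : ℝ)⁻¹ * β ((Finset.univ.filter (fun t => act t = a)).card)
        = (n : ℝ)⁻¹ * ∑ a : A, β ((Finset.univ.filter (fun t => act t = a)).card) := by
      rw [Finset.mul_sum]
    rw [h2] at this
    calc ∑ a : A, β ((Finset.univ.filter (fun t => act t = a)).card)
        = (n : ℝ) * ((n : ℝ)⁻¹ * ∑ a : A, β ((Finset.univ.filter (fun t => act t = a)).card)) := by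
          field_simp
      _ ≤ (n : ℝ) * β ((T : ℝ) / n) := mul_le_mul_of_nonneg_left this hnR.le
  calc |∑ t, ((∑ i, r (act t) i * p t i) - ∑ i, r (act t) i * yv t i)|
      = |∑ a : A, ∑ t ∈ Finset.univ.filter (fun t => act t = a),
          ((∑ i, r (act t) i * p t i) - ∑ i, r (act t) i * yv t i)| := by rw [hregroup]
    _ ≤ ∑ a : A, |∑ t ∈ Finset.univ.filter (fun t => act t = a),
          ((∑ i, r (act t) i * p t i) - ∑ i, r (act t) i * yv t i)| :=
        Finset.abs_sum_le_sum_abs _ _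
    _ ≤ ∑ a : A, L * β ((Finset.univ.filter (fun t => act t = a)).card) :=
        Finset.sum_le_sum (fun a _ => hper a)
    _ = L * ∑ a : A, β ((Finset.univ.filter (fun t => act t = a)).card) := by
        rw [Finset.mul_sum]
    _ ≤ L * ((n : ℝ) * β ((T : ℝ) / n)) := mul_le_mul_of_nonneg_left hjensen hL
    _ = L * n * β ((T : ℝ) / n) := by ring
end
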